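/- There exists a constant B > 0 such that the derivative of g satisfies −g′(z) ≤ B/z for all 0 < z ≤ B, and −g′(z) ≤ 3·e^{−2z} for all z ≥ B/2, where g(z) = −log(β(1 − e^{−z})) and β(u) = (u + √(u(4−3u)))/2. -/

import Mathlib

noncomputable def betaFn (u : ℝ) : ℝ := (u + Real.sqrt (u * (4 - 3 * u))) / 2

noncomputable def gFn (z : ℝ) : ℝ := - Real.log (betaFn (1 - Real.exp (-z)))

lemma exp_neg_lt_one {z : ℝ} (hz : 0 < z) : Real.exp (-z) < 1 :=
  Real.exp_lt_one_iff.mpr (by linarith)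

lemma hasDerivAt_gFn (z : ℝ) (hz : 0 < z) :
    HasDerivAt gFn
      (-((betaFn (1 - Real.exp (-z)))⁻¹ *
        (((1 + (Real.sqrt ((1 - Real.exp (-z)) * (4 - 3 * (1 - Real.exp (-z)))))⁻¹ / 2 *
          (4 - 6 * (1 - Real.exp (-z)))) / 2) * Real.exp (-z)))) z := by
  set t := Real.exp (-z) with htdef
  have ht0 : 0 < t := Real.exp_pos _
  have ht1 : t < 1 := exp_neg_lt_one hz
  set u := 1 - t with hudef
  have hu0 : 0 < u := by simp [hudef]; linarith
  have hu1 : u < 1 := by simp [hudef]; linarith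
  have harg : 0 < u * (4 - 3 * u) := by nlinarith
  have hs0 : 0 < Real.sqrt (u * (4 - 3 * u)) := Real.sqrt_pos.2 harg
  -- derivative of inner polynomial
  have hq : HasDerivAt (fun x : ℝ => x * (4 - 3 * x)) (4 - 6 * u) u := by
    have h := (hasDerivAt_id u).mul ((hasDerivAt_const u (4:ℝ)).sub ((hasDerivAt_id u).const_mul 3))
    refine h.congr_deriv ?_
    simp; ring
  -- derivative of sqrt composed
  have hsq : HasDerivAt (fun x : ℝ => Real.sqrt (x * (4 - 3 * x)))
      ((Real.sqrt (u * (4 - 3 * u)))⁻¹ / 2 * (4 - 6 * u)) u := by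
    have := (Real.hasDerivAt_sqrt harg.ne').comp u hq
    refine this.congr_deriv ?_
    ring
  -- derivative of betaFn
  have hb : HasDerivAt betaFn
      ((1 + (Real.sqrt (u * (4 - 3 * u)))⁻¹ / 2 * (4 - 6 * u)) / 2) u := by
    have := ((hasDerivAt_id u).add hsq).div_const 2
    exact this
  -- derivative of z ↦ 1 - exp(-z)
  have he : HasDerivAt (fun z : ℝ => Real.exp (-z)) (-t) z := by
    exact ((Real.hasDerivAt_exp (-z)).comp z ((hasDerivAt_id z).neg)).congr_deriv (by rw [htdef]; ring)
  have hz1 : HasDerivAt (fun z : ℝ => 1 - Real.exp (-z)) t z := by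
    exact ((hasDerivAt_const z (1:ℝ)).sub he).congr_deriv (by ring)
  have hcomp : HasDerivAt (fun z : ℝ => betaFn (1 - Real.exp (-z)))
      (((1 + (Real.sqrt (u * (4 - 3 * u)))⁻¹ / 2 * (4 - 6 * u)) / 2) * t) z := by
    rw [hudef, htdef] at hb; exact hb.comp z hz1
  have hβ0 : 0 < betaFn u := by
    have : betaFn u = (u + Real.sqrt (u * (4 - 3 * u))) / 2 := rfl
    rw [this]; positivity
  have hlog := (Real.hasDerivAt_log hβ0.ne').comp z hcomp
  exact hlog.neg

lemma neg_deriv_gFn (z : ℝ) (hz : 0 < z) :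
    -(deriv gFn z) =
      Real.exp (-z) * (Real.sqrt ((1 - Real.exp (-z)) * (4 - 3 * (1 - Real.exp (-z)))) + 3 * Real.exp (-z) - 1) /
        (Real.sqrt ((1 - Real.exp (-z)) * (4 - 3 * (1 - Real.exp (-z)))) *
          (1 - Real.exp (-z) + Real.sqrt ((1 - Real.exp (-z)) * (4 - 3 * (1 - Real.exp (-z)))))) := by
  have ht0 : 0 < Real.exp (-z) := Real.exp_pos _
  have ht1 : Real.exp (-z) < 1 := exp_neg_lt_one hz
  set t := Real.exp (-z) with htdef
  set s := Real.sqrt ((1 - t) * (4 - 3 * (1 - t))) with hsdef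
  have harg : 0 < (1 - t) * (4 - 3 * (1 - t)) := by nlinarith
  have hs0 : 0 < s := Real.sqrt_pos.2 harg
  have hd := (hasDerivAt_gFn z hz).deriv
  rw [hd, ← htdef, ← hsdef]
  have hβ : betaFn (1 - t) = ((1 - t) + s) / 2 := rfl
  rw [hβ]
  have hden : (0:ℝ) < 1 - t + s := by linarith
  field_simp
  ring

lemma key_num (t s : ℝ) (ht0 : 0 < t) (ht1 : t < 1) (hs0 : 0 < s)
    (hs2 : s ^ 2 = (1 - t) * (1 + 3 * t)) :
    t * (s + 3 * t - 1) / (s * (1 - t + s)) ≤ 4 / (1 - t) := by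
  have hden : 0 < s * (1 - t + s) := by nlinarith
  have hsle : s ≤ 2 := by nlinarith
  have hnum : t * (s + 3 * t - 1) ≤ 4 := by nlinarith
  have hdge : 1 - t ≤ s * (1 - t + s) := by nlinarith
  rw [div_le_div_iff₀ hden (by linarith : (0:ℝ) < 1 - t)]
  nlinarith [mul_le_mul_of_nonneg_right hnum (by linarith : (0:ℝ) ≤ 1 - t)]

lemma key_small (t s : ℝ) (ht0 : 0 < t) (ht2 : t ≤ 1/2) (hs0 : 0 < s)
    (hs2 : s ^ 2 = (1 - t) * (1 + 3 * t)) :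
    t * (s + 3 * t - 1) / (s * (1 - t + s)) ≤ 3 * t ^ 2 := by
  have ht1 : t < 1 := by linarith
  have hden : 0 < s * (1 - t + s) := by nlinarith
  rw [div_le_iff₀ hden]
  have h1 : 0 < 1 - 3 * t + 3 * t ^ 2 := by nlinarith [sq_nonneg (2 * t - 1)]
  have h2 : 0 < 1 + 6 * t ^ 2 - 9 * t ^ 3 := by nlinarith
  have h3 : (s * (1 - 3 * t + 3 * t ^ 2)) ^ 2 ≤ (1 + 6 * t ^ 2 - 9 * t ^ 3) ^ 2 := by
    have hD : 0 ≤ 4 * t + 12 * t^2 - 48 * t^3 + 108 * t^4 - 180 * t^5 + 108 * t^6 := by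
      nlinarith [sq_nonneg t, sq_nonneg (t - 1/2), mul_nonneg ht0.le ht0.le,
        mul_nonneg (mul_nonneg ht0.le ht0.le) ht0.le,
        mul_nonneg (mul_nonneg (mul_nonneg ht0.le ht0.le) ht0.le) ht0.le,
        mul_nonneg (mul_nonneg (mul_nonneg (mul_nonneg ht0.le ht0.le) ht0.le) ht0.le) ht0.le,
        sq_nonneg (t^2 - t), sq_nonneg (t^2*(2*t-1)), mul_nonneg ht0.le (sq_nonneg (2*t-1))]
    nlinarith [hs2]
  have key : s * (1 - 3 * t + 3 * t ^ 2) ≤ 1 + 6 * t ^ 2 - 9 * t ^ 3 := by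
    nlinarith [h3, mul_pos hs0 h1, h2]
  nlinarith [mul_le_mul_of_nonneg_left key ht0.le, hs2]

theorem g_deriv_bounds :
    ∃ B > (0:ℝ),
      (∀ z : ℝ, 0 < z → z ≤ B → -(deriv gFn z) ≤ B / z) ∧
      (∀ z : ℝ, B / 2 ≤ z → -(deriv gFn z) ≤ 3 * Real.exp (-2 * z)) := by
  have he2 : (2:ℝ) ≤ Real.exp 1 := by
    have := Real.add_one_le_exp (1:ℝ); linarith
  refine ⟨8, by norm_num, ?_, ?_⟩
  · intro z hz hz8
    have ht0 : 0 < Real.exp (-z) := Real.exp_pos _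
    have ht1 : Real.exp (-z) < 1 := exp_neg_lt_one hz
    set t := Real.exp (-z) with htdef
    set s := Real.sqrt ((1 - t) * (4 - 3 * (1 - t))) with hsdef
    have harg : 0 < (1 - t) * (4 - 3 * (1 - t)) := by nlinarith
    have hs0 : 0 < s := Real.sqrt_pos.2 harg
    have hs2 : s ^ 2 = (1 - t) * (1 + 3 * t) := by
      rw [hsdef, Real.sq_sqrt harg.le]; ring
    have hnd : -(deriv gFn z) = t * (s + 3 * t - 1) / (s * (1 - t + s)) := by
      rw [neg_deriv_gFn z hz]
    rw [hnd]
    rcases le_or_gt z 1 with hle | hgt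
    · -- small z : use 4/(1-t) ≤ 8/z
      have h1 := key_num t s ht0 ht1 hs0 hs2
      have hexp : z + 1 ≤ Real.exp z := Real.add_one_le_exp z
      have ht_le : t ≤ 1 / (1 + z) := by
        rw [htdef, Real.exp_neg, one_div]
        exact inv_anti₀ (by linarith) (by linarith)
      have h1t : z / 2 ≤ 1 - t := by
        have h2 : 1 / (1 + z) ≤ 1 - z / 2 := by
          rw [div_le_iff₀ (by linarith : (0:ℝ) < 1 + z)]
          nlinarith
        linarith
      have : 4 / (1 - t) ≤ 8 / z := by
        rw [div_le_div_iff₀ (by linarith) hz]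
        nlinarith
      linarith
    · -- z ≥ 1 : use 3 t^2 ≤ 3 e^{-2} ≤ 1 ≤ 8/z
      have ht_half : t ≤ 1/2 := by
        have : t ≤ Real.exp (-1) := Real.exp_le_exp.mpr (by linarith)
        have h : Real.exp (-1) ≤ 1/2 := by
          rw [Real.exp_neg]
          rw [inv_le_comm₀ (Real.exp_pos 1) (by norm_num)]
          linarith
        linarith
      have h1 := key_small t s ht0 ht_half hs0 hs2
      have ht2 : 3 * t ^ 2 ≤ 1 := by nlinarith
      have : (1:ℝ) ≤ 8 / z := by
        rw [le_div_iff₀ hz]; linarith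
      linarith
  · intro z hz4
    have hz : 0 < z := by linarith
    have ht0 : 0 < Real.exp (-z) := Real.exp_pos _
    have ht1 : Real.exp (-z) < 1 := exp_neg_lt_one hz
    set t := Real.exp (-z) with htdef
    set s := Real.sqrt ((1 - t) * (4 - 3 * (1 - t))) with hsdef
    have harg : 0 < (1 - t) * (4 - 3 * (1 - t)) := by nlinarith
    have hs0 : 0 < s := Real.sqrt_pos.2 harg
    have hs2 : s ^ 2 = (1 - t) * (1 + 3 * t) := by
      rw [hsdef, Real.sq_sqrt harg.le]; ring
    have hnd : -(deriv gFn z) = t * (s + 3 * t - 1) / (s * (1 - t + s)) := by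
      rw [neg_deriv_gFn z hz]
    rw [hnd]
    have ht_half : t ≤ 1/2 := by
      have h1 : t ≤ Real.exp (-1) := Real.exp_le_exp.mpr (by linarith)
      have h : Real.exp (-1) ≤ 1/2 := by
        rw [Real.exp_neg]
        rw [inv_le_comm₀ (Real.exp_pos 1) (by norm_num)]
        linarith
      linarith
    have h1 := key_small t s ht0 ht_half hs0 hs2
    have ht2 : t ^ 2 = Real.exp (-2 * z) := by
      rw [htdef, sq, ← Real.exp_add]
      ring_nf
    calc t * (s + 3 * t - 1) / (s * (1 - t + s)) ≤ 3 * t ^ 2 := h1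
      _ = 3 * Real.exp (-2 * z) := by rw [ht2]
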